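/- Let n ∈ ℝ³ be a unit vector and let f : ℝ → ℝ be continuous. Then for all vectors u, v, w ∈ ℝ³, ∫_{S²} (Ω·u)(Ω·v)(Ω·w) f(Ω·n) dσ(Ω) = a·[(u·v)(n·w) + (u·w)(n·v) + (v·w)(n·u)] + b·(n·u)(n·v)(n·w), where a = (1/2)∫_{S²} ((Ω·n) − (Ω·n)³) f(Ω·n) dσ(Ω) and b = (1/2)∫_{S²} (5(Ω·n)³ − 3(Ω·n)) f(Ω·n) dσ(Ω). (This is the representation of the third-moment tensor Q^{M₁} = (3cE/2)[(χ₁−χ₃)(Id ∨ n) + (5χ₃−3χ₁) n^{∨3}] in terms of the Eddington factors χ₁, χ₃.) -/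

import Mathlib

open MeasureTheory RealInnerProductSpace Metric Set Pointwise

noncomputable section

namespace SphereThirdMomentAux

abbrev E3 : Type := EuclideanSpace ℝ (Fin 3)
abbrev S2 : Set E3 := Metric.sphere (0 : E3) 1

/-- restriction of a linear isometry equiv to the unit sphere -/
def sphereMap (e : E3 ≃ₗᵢ[ℝ] E3) : Metric.sphere (0 : E3) 1 ≃ₜ Metric.sphere (0 : E3) 1 where
  toFun Ω := ⟨e Ω, mem_sphere_zero_iff_norm.2 (by
    rw [e.norm_map]; exact mem_sphere_zero_iff_norm.1 Ω.2)⟩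
  invFun Ω := ⟨e.symm Ω, mem_sphere_zero_iff_norm.2 (by
    rw [e.symm.norm_map]; exact mem_sphere_zero_iff_norm.1 Ω.2)⟩
  left_inv Ω := by ext : 1; simp
  right_inv Ω := by ext : 1; simp
  continuous_toFun := Continuous.subtype_mk (e.continuous.comp continuous_subtype_val) _
  continuous_invFun := Continuous.subtype_mk (e.symm.continuous.comp continuous_subtype_val) _

lemma sphereMap_apply (e : E3 ≃ₗᵢ[ℝ] E3) (Ω : Metric.sphere (0 : E3) 1) :
    ((sphereMap e Ω : Metric.sphere (0 : E3) 1) : E3) = e Ω := rfl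

lemma measurePreserving_sphereMap (e : E3 ≃ₗᵢ[ℝ] E3) :
    MeasurePreserving (sphereMap e) (volume : Measure E3).toSphere
      (volume : Measure E3).toSphere := by
  refine ⟨(sphereMap e).continuous.measurable, ?_⟩
  refine Measure.ext fun s hs => ?_
  rw [Measure.map_apply (sphereMap e).continuous.measurable hs,
    Measure.toSphere_apply' _ hs, Measure.toSphere_apply' _ ((sphereMap e).continuous.measurable hs)]
  congr 1
  have him : (Subtype.val '' (sphereMap e ⁻¹' s)) = e.symm '' (Subtype.val '' s) := by
    ext x
    constructor
    · rintro ⟨Ω, hΩ, rfl⟩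
      exact ⟨sphereMap e Ω, ⟨_, hΩ, rfl⟩, by simp [sphereMap_apply]⟩
    · rintro ⟨y, ⟨Ω, hΩ, rfl⟩, rfl⟩
      refine ⟨(sphereMap e).symm Ω, ?_, rfl⟩
      show sphereMap e ((sphereMap e).symm Ω) ∈ s
      simpa using hΩ
  rw [him]
  have hsm : Ioo (0:ℝ) 1 • (e.symm '' (Subtype.val '' s))
      = e.symm '' (Ioo (0:ℝ) 1 • (Subtype.val '' s)) := by
    ext x
    simp only [Set.mem_smul, Set.mem_image]
    constructor
    · rintro ⟨r, hr, y, ⟨z, hz, rfl⟩, rfl⟩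
      exact ⟨r • z, ⟨r, hr, z, hz, rfl⟩, by simp⟩
    · rintro ⟨y, ⟨r, hr, z, hz, rfl⟩, rfl⟩
      exact ⟨r, hr, e.symm z, ⟨z, hz, rfl⟩, by simp⟩
  rw [hsm]
  have : e.symm '' (Ioo (0:ℝ) 1 • (Subtype.val '' s)) = ⇑e ⁻¹' (Ioo (0:ℝ) 1 • (Subtype.val '' s)) := by
    ext x; simp [Set.mem_image, Set.mem_preimage]
    constructor
    · rintro ⟨y, hy, rfl⟩; simpa using hy
    · intro hx; exact ⟨e x, hx, by simp⟩
  rw [this]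
  have hme : (volume : Measure E3) (⇑e ⁻¹' (Ioo (0:ℝ) 1 • (Subtype.val '' s)))
      = (volume : Measure E3) (Ioo (0:ℝ) 1 • (Subtype.val '' s)) := by
    have h1 := e.measurePreserving.map_eq
    have h2 := MeasurableEquiv.map_apply (e.toHomeomorph.toMeasurableEquiv)
      (μ := (volume : Measure E3)) (Ioo (0:ℝ) 1 • (Subtype.val '' s))
    have : (e.toHomeomorph.toMeasurableEquiv : E3 → E3) = ⇑e := rfl
    rw [this] at h2
    rw [← h2, h1]
  exact hme


abbrev σ₀ : Measure (Metric.sphere (0 : E3) 1) := (volume : Measure E3).toSphere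

lemma integral_comp_sphereMap (e : E3 ≃ₗᵢ[ℝ] E3) (g : Metric.sphere (0 : E3) 1 → ℝ) :
    ∫ Ω, g (sphereMap e Ω) ∂σ₀ = ∫ Ω, g Ω ∂σ₀ :=
  (measurePreserving_sphereMap e).integral_comp (sphereMap e).measurableEmbedding g

lemma integrable_cont (g : Metric.sphere (0 : E3) 1 → ℝ) (hg : Continuous g) :
    Integrable g σ₀ := by
  have : IntegrableOn g Set.univ σ₀ :=
    hg.continuousOn.integrableOn_compact isCompact_univ
  simpa [integrableOn_univ] using this

variable (n : E3) (f : ℝ → ℝ)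

/-- the third-moment trilinear form -/
def T (u v w : E3) : ℝ :=
  ∫ Ω : Metric.sphere (0 : E3) 1,
    ⟪(Ω : E3), u⟫ * ⟪(Ω : E3), v⟫ * ⟪(Ω : E3), w⟫ * f ⟪(Ω : E3), n⟫ ∂σ₀

variable (hf : Continuous f)

lemma cont_inner (u : E3) : Continuous fun Ω : Metric.sphere (0 : E3) 1 => ⟪(Ω : E3), u⟫ :=
  Continuous.inner continuous_subtype_val continuous_const

include hf in
lemma integrable_T (u v w : E3) :
    Integrable (fun Ω : Metric.sphere (0 : E3) 1 =>
      ⟪(Ω : E3), u⟫ * ⟪(Ω : E3), v⟫ * ⟪(Ω : E3), w⟫ * f ⟪(Ω : E3), n⟫) σ₀ :=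
  integrable_cont _ ((((cont_inner u).mul (cont_inner v)).mul (cont_inner w)).mul
    (hf.comp (cont_inner n)))

lemma T_comm12 (u v w : E3) : T n f u v w = T n f v u w := by
  unfold T; congr 1; funext Ω; ring

lemma T_comm13 (u v w : E3) : T n f u v w = T n f w v u := by
  unfold T; congr 1; funext Ω; ring

lemma T_comm23 (u v w : E3) : T n f u v w = T n f u w v := by
  unfold T; congr 1; funext Ω; ring

include hf in
lemma T_add3 (u v w w' : E3) : T n f u v (w + w') = T n f u v w + T n f u v w' := by
  unfold T
  rw [← integral_add (integrable_T n f hf u v w) (integrable_T n f hf u v w')]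
  congr 1; funext Ω
  rw [inner_add_right]; ring

lemma T_smul3 (a : ℝ) (u v w : E3) : T n f u v (a • w) = a * T n f u v w := by
  unfold T
  rw [show a * ∫ Ω : Metric.sphere (0 : E3) 1,
      ⟪(Ω : E3), u⟫ * ⟪(Ω : E3), v⟫ * ⟪(Ω : E3), w⟫ * f ⟪(Ω : E3), n⟫ ∂σ₀
    = ∫ Ω : Metric.sphere (0 : E3) 1,
      a • (⟪(Ω : E3), u⟫ * ⟪(Ω : E3), v⟫ * ⟪(Ω : E3), w⟫ * f ⟪(Ω : E3), n⟫) ∂σ₀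
    from (integral_smul a _).symm]
  congr 1; funext Ω
  rw [real_inner_smul_right]
  simp only [smul_eq_mul]; ring

omit hf in
lemma T_isometry (e : E3 ≃ₗᵢ[ℝ] E3) (he : e n = n) (u v w : E3) :
    T n f (e u) (e v) (e w) = T n f u v w := by
  unfold T
  rw [← integral_comp_sphereMap e
    (fun Ω => ⟪(Ω : E3), e u⟫ * ⟪(Ω : E3), e v⟫ * ⟪(Ω : E3), e w⟫ * f ⟪(Ω : E3), n⟫)]
  congr 1; funext Ω
  rw [sphereMap_apply]
  rw [show (⟪e (Ω : E3), n⟫ : ℝ) = ⟪e (Ω : E3), e n⟫ by rw [he]]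
  rw [e.inner_map_map, e.inner_map_map, e.inner_map_map, e.inner_map_map]


lemma T_neg3 (u v w : E3) : T n f u v (-w) = - T n f u v w := by
  rw [show -w = (-1 : ℝ) • w by simp, T_smul3]; ring

lemma T_zero3 (u v : E3) : T n f u v 0 = 0 := by
  rw [show (0 : E3) = (0 : ℝ) • (0 : E3) by simp, T_smul3]; ring

include hf in
lemma T_add1 (u u' v w : E3) : T n f (u + u') v w = T n f u v w + T n f u' v w := by
  rw [T_comm13, T_add3 n f hf, T_comm13, T_comm13 n f w v u']

lemma T_smul1 (a : ℝ) (u v w : E3) : T n f (a • u) v w = a * T n f u v w := by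
  rw [T_comm13, T_smul3, T_comm13]

include hf in
lemma T_add2 (u v v' w : E3) : T n f u (v + v') w = T n f u v w + T n f u v' w := by
  rw [T_comm23, T_add3 n f hf, T_comm23, T_comm23 n f u w v']

lemma T_smul2 (a : ℝ) (u v w : E3) : T n f u (a • v) w = a * T n f u v w := by
  rw [T_comm23, T_smul3, T_comm23]

lemma T_neg1 (u v w : E3) : T n f (-u) v w = - T n f u v w := by
  rw [T_comm13, T_neg3, T_comm13]

lemma T_neg2 (u v w : E3) : T n f u (-v) w = - T n f u v w := by
  rw [T_comm23, T_neg3, T_comm23]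

section Reflections

variable (hn : ‖n‖ = 1)

/-- point reflection about the axis `ℝ ∙ n` -/
def e₀ : E3 ≃ₗᵢ[ℝ] E3 := Submodule.reflection (ℝ ∙ n)

lemma e₀_n : e₀ n n = n :=
  Submodule.reflection_mem_subspace_eq_self (Submodule.mem_span_singleton_self n)

lemma e₀_perp {x : E3} (hx : ⟪n, x⟫ = 0) : e₀ n x = -x := by
  apply Submodule.reflection_mem_subspace_orthogonalComplement_eq_neg
  rw [Submodule.mem_orthogonal]
  rintro u hu
  rcases Submodule.mem_span_singleton.1 hu with ⟨a, rfl⟩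
  rw [real_inner_smul_left, hx]; ring

lemma mem_orthogonal_span_pair {a b y : E3} (ha : ⟪a, y⟫ = 0) (hb : ⟪b, y⟫ = 0) :
    y ∈ (Submodule.span ℝ {a, b})ᗮ := by
  rw [Submodule.mem_orthogonal]
  intro u hu
  induction hu using Submodule.span_induction with
  | mem z hz =>
    rcases hz with rfl | rfl
    · exact ha
    · exact hb
  | zero => simp
  | add z w _ _ hz hw => rw [inner_add_left, hz, hw]; ring
  | smul a z _ hz => rw [real_inner_smul_left, hz]; ring

/-- vanishing of terms with one perpendicular slot -/
lemma T_odd1 {x : E3} (hx : ⟪n, x⟫ = 0) : T n f n n x = 0 := by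
  have h := T_isometry n f (e₀ n) (e₀_n n) n n x
  rw [e₀_n, e₀_perp n hx, T_neg3] at h
  linarith

/-- vanishing of terms with three perpendicular slots -/
lemma T_odd3 {x y z : E3} (hx : ⟪n, x⟫ = 0) (hy : ⟪n, y⟫ = 0) (hz : ⟪n, z⟫ = 0) :
    T n f x y z = 0 := by
  have h := T_isometry n f (e₀ n) (e₀_n n) x y z
  rw [e₀_perp n hx, e₀_perp n hy, e₀_perp n hz, T_neg1, T_neg2, T_neg3] at h
  linarith

/-- `T n x y = 0` when `x, y` are both perpendicular to `n` and to each other -/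
lemma T_perp {x y : E3} (hxn : ⟪n, x⟫ = 0) (hyn : ⟪n, y⟫ = 0) (hxy : ⟪x, y⟫ = 0) :
    T n f n x y = 0 := by
  set K : Submodule ℝ E3 := Submodule.span ℝ {n, x} with hK
  set e : E3 ≃ₗᵢ[ℝ] E3 := Submodule.reflection K with he
  have hen : e n = n := Submodule.reflection_mem_subspace_eq_self
    (Submodule.subset_span (by simp))
  have hex : e x = x := Submodule.reflection_mem_subspace_eq_self
    (Submodule.subset_span (by simp))
  have hey : e y = -y := Submodule.reflection_mem_subspace_orthogonalComplement_eq_neg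
    (mem_orthogonal_span_pair hyn hxy)
  have h := T_isometry n f e hen n x y
  rw [hen, hex, hey, T_neg3] at h
  linarith

/-- `T n x x = T n y y` when `x, y ⟂ n` have equal norms -/
lemma T_eqnorm {x y : E3} (hxn : ⟪n, x⟫ = 0) (hyn : ⟪n, y⟫ = 0) (hxy : ‖x‖ = ‖y‖) :
    T n f n x x = T n f n y y := by
  set K : Submodule ℝ E3 := Submodule.span ℝ {n, x + y} with hK
  set e : E3 ≃ₗᵢ[ℝ] E3 := Submodule.reflection K with he
  have hen : e n = n := Submodule.reflection_mem_subspace_eq_self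
    (Submodule.subset_span (by simp))
  have hfix : e (x + y) = x + y := Submodule.reflection_mem_subspace_eq_self
    (Submodule.subset_span (by simp))
  have hneg : e (x - y) = -(x - y) := by
    apply Submodule.reflection_mem_subspace_orthogonalComplement_eq_neg
    apply mem_orthogonal_span_pair
    · rw [inner_sub_right, hxn, hyn]; ring
    · rw [inner_add_left, inner_sub_right, inner_sub_right,
        real_inner_self_eq_norm_mul_norm, real_inner_self_eq_norm_mul_norm,
        real_inner_comm y x, hxy]
      ring
  have hq : e x = y := by
    have h2 : e ((x + y) + (x - y)) = (x + y) + (-(x - y)) := by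
      rw [map_add, hfix, hneg]
    have hl : (x + y) + (x - y) = (2 : ℝ) • x := by
      rw [two_smul]; abel
    have hr : (x + y) + (-(x - y)) = (2 : ℝ) • y := by
      rw [two_smul]; abel
    rw [hl, hr, _root_.map_smul] at h2
    exact smul_right_injective E3 (two_ne_zero (α := ℝ)) h2
  have h := T_isometry n f e hen n x x
  rw [hen, hq] at h
  exact h.symm

end Reflections


lemma mem_orthogonal_span_singleton {a y : E3} (ha : ⟪a, y⟫ = 0) :
    y ∈ (ℝ ∙ a)ᗮ := by
  rw [Submodule.mem_orthogonal]
  intro u hu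
  rcases Submodule.mem_span_singleton.1 hu with ⟨c, rfl⟩
  rw [real_inner_smul_left, ha]; ring

/-- there exist two orthonormal vectors perpendicular to `n`, together with
the Parseval identity for the triple `(n, p, q)` -/
lemma exists_pq (hn : ‖n‖ = 1) :
    ∃ p q : E3, ⟪n, p⟫ = 0 ∧ ⟪n, q⟫ = 0 ∧ ⟪p, q⟫ = 0 ∧ ‖p‖ = 1 ∧ ‖q‖ = 1 ∧
      ∀ x : E3, ⟪x, p⟫ ^ 2 + ⟪x, q⟫ ^ 2 = ‖x‖ ^ 2 - ⟪x, n⟫ ^ 2 := by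
  set b := EuclideanSpace.basisFun (Fin 3) ℝ with hb
  have hob := b.orthonormal
  have hnorm : ∀ i, ‖b i‖ = 1 := hob.1
  have hij : ∀ i j, i ≠ j → ⟪b i, b j⟫ = 0 := fun i j h => hob.2 h
  set e : E3 ≃ₗᵢ[ℝ] E3 := Submodule.reflection (ℝ ∙ (b 0 + n)) with he
  have hen : e (b 0) = n := by
    have hfix : e (b 0 + n) = b 0 + n := Submodule.reflection_mem_subspace_eq_self
      (Submodule.mem_span_singleton_self _)
    have hneg : e (b 0 - n) = -(b 0 - n) := by
      apply Submodule.reflection_mem_subspace_orthogonalComplement_eq_neg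
      apply mem_orthogonal_span_singleton
      rw [inner_add_left, inner_sub_right, inner_sub_right,
        real_inner_self_eq_norm_mul_norm, real_inner_self_eq_norm_mul_norm,
        real_inner_comm n (b 0), hnorm 0, hn]
      ring
    have h2 : e ((b 0 + n) + (b 0 - n)) = (b 0 + n) + (-(b 0 - n)) := by
      rw [map_add, hfix, hneg]
    have hl : (b 0 + n) + (b 0 - n) = (2 : ℝ) • (b 0) := by rw [two_smul]; abel
    have hr : (b 0 + n) + (-(b 0 - n)) = (2 : ℝ) • n := by rw [two_smul]; abel
    rw [hl, hr, _root_.map_smul] at h2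
    exact smul_right_injective E3 (two_ne_zero (α := ℝ)) h2
  refine ⟨e (b 1), e (b 2), ?_, ?_, ?_, ?_, ?_, ?_⟩
  · rw [← hen, e.inner_map_map]; exact hij 0 1 (by decide)
  · rw [← hen, e.inner_map_map]; exact hij 0 2 (by decide)
  · rw [e.inner_map_map]; exact hij 1 2 (by decide)
  · rw [e.norm_map]; exact hnorm 1
  · rw [e.norm_map]; exact hnorm 2
  · intro x
    have key : ∀ i, (⟪x, e (b i)⟫ : ℝ) = ⟪e.symm x, b i⟫ := by
      intro i
      conv_lhs => rw [show x = e (e.symm x) by simp]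
      rw [e.inner_map_map]
    have hsum := b.sum_inner_mul_inner (e.symm x) (e.symm x)
    rw [Fin.sum_univ_three] at hsum
    have hx : (⟪e.symm x, e.symm x⟫ : ℝ) = ‖x‖ ^ 2 := by
      rw [real_inner_self_eq_norm_mul_norm, e.symm.norm_map]; ring
    have hcomm : ∀ i, (⟪(b : OrthonormalBasis (Fin 3) ℝ E3) i, e.symm x⟫ : ℝ)
        = ⟪e.symm x, b i⟫ := fun i => real_inner_comm _ _
    rw [hx, hcomm 0, hcomm 1, hcomm 2] at hsum
    rw [key 1, key 2, ← hen, key 0]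
    nlinarith [hsum]

end SphereThirdMomentAux


open MeasureTheory RealInnerProductSpace Metric Set Pointwise

noncomputable section

namespace SphereThirdMomentAux

variable (n : E3) (f : ℝ → ℝ) (hf : Continuous f)

include hf in
lemma T_nxx {p : E3} (hpn : ⟪n, p⟫ = 0) (hp1 : ‖p‖ = 1) {x : E3} (hx : ⟪n, x⟫ = 0) :
    T n f n x x = ‖x‖ ^ 2 * T n f n p p := by
  have hsp : ⟪n, ‖x‖ • p⟫ = 0 := by rw [real_inner_smul_right, hpn]; ring
  have hns : ‖x‖ = ‖(‖x‖ • p)‖ := by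
    rw [norm_smul, hp1, Real.norm_eq_abs, abs_norm, mul_one]
  have h := T_eqnorm n f hx hsp hns
  rw [h, T_smul2, T_smul3]; ring

include hf in
lemma B_eq {p : E3} (hpn : ⟪n, p⟫ = 0) (hp1 : ‖p‖ = 1) {x y : E3}
    (hxn : ⟪n, x⟫ = 0) (hyn : ⟪n, y⟫ = 0) :
    T n f n x y = ⟪x, y⟫ * T n f n p p := by
  by_cases hx0 : x = 0
  · subst hx0
    rw [T_comm23, T_zero3, inner_zero_left]; ring
  · have hxne : ‖x‖ ^ 2 ≠ 0 := pow_ne_zero _ (norm_ne_zero_iff.2 hx0)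
    set t : ℝ := ⟪x, y⟫ / ‖x‖ ^ 2 with ht
    have hy : y = t • x + (y - t • x) := by abel
    have hrn : ⟪n, y - t • x⟫ = 0 := by
      rw [inner_sub_right, real_inner_smul_right, hxn, hyn]; ring
    have hxr : ⟪x, y - t • x⟫ = 0 := by
      rw [inner_sub_right, real_inner_smul_right, real_inner_self_eq_norm_sq, ht,
        div_mul_cancel₀ _ hxne]
      ring
    calc T n f n x y = T n f n x (t • x + (y - t • x)) := by rw [← hy]
      _ = t * T n f n x x + T n f n x (y - t • x) := by
          rw [T_add3 n f hf, T_smul3]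
      _ = t * T n f n x x := by rw [T_perp n f hxn hrn hxr]; ring
      _ = t * (‖x‖ ^ 2 * T n f n p p) := by rw [T_nxx n f hf hpn hp1 hxn]
      _ = (t * ‖x‖ ^ 2) * T n f n p p := by ring
      _ = ⟪x, y⟫ * T n f n p p := by rw [ht, div_mul_cancel₀ _ hxne]

end SphereThirdMomentAux

open MeasureTheory RealInnerProductSpace Metric Set Pointwise

noncomputable section

namespace SphereThirdMomentAux

variable (n : E3) (f : ℝ → ℝ) (hf : Continuous f)

include hf in
lemma J_eq {p q : E3} (hpn : ⟪n, p⟫ = 0) (hqn : ⟪n, q⟫ = 0)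
    (hPar : ∀ x : E3, ⟪x, p⟫ ^ 2 + ⟪x, q⟫ ^ 2 = ‖x‖ ^ 2 - ⟪x, n⟫ ^ 2) :
    (∫ Ω : Metric.sphere (0 : E3) 1,
        (⟪(Ω : E3), n⟫ - ⟪(Ω : E3), n⟫ ^ 3) * f ⟪(Ω : E3), n⟫ ∂σ₀)
      = T n f n p p + T n f n q q := by
  unfold T
  rw [← integral_add (integrable_T n f hf n p p) (integrable_T n f hf n q q)]
  congr 1; funext Ω
  have hΩ : ‖(Ω : E3)‖ = 1 := mem_sphere_zero_iff_norm.1 Ω.2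
  have h := hPar (Ω : E3)
  rw [hΩ] at h
  linear_combination (-(⟪(Ω : E3), n⟫ * f ⟪(Ω : E3), n⟫)) * h

include hf in
lemma K_eq :
    (∫ Ω : Metric.sphere (0 : E3) 1,
        (5 * ⟪(Ω : E3), n⟫ ^ 3 - 3 * ⟪(Ω : E3), n⟫) * f ⟪(Ω : E3), n⟫ ∂σ₀)
      = 2 * T n f n n n
        - 3 * ∫ Ω : Metric.sphere (0 : E3) 1,
            (⟪(Ω : E3), n⟫ - ⟪(Ω : E3), n⟫ ^ 3) * f ⟪(Ω : E3), n⟫ ∂σ₀ := by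
  have h1 : Integrable (fun Ω : Metric.sphere (0 : E3) 1 =>
      ⟪(Ω : E3), n⟫ * ⟪(Ω : E3), n⟫ * ⟪(Ω : E3), n⟫ * f ⟪(Ω : E3), n⟫) σ₀ :=
    integrable_T n f hf n n n
  have h2 : Integrable (fun Ω : Metric.sphere (0 : E3) 1 =>
      (⟪(Ω : E3), n⟫ - ⟪(Ω : E3), n⟫ ^ 3) * f ⟪(Ω : E3), n⟫) σ₀ :=
    integrable_cont _ ((((cont_inner n).sub ((cont_inner n).pow 3)).mul
      (hf.comp (cont_inner n))))
  have s1 : (∫ Ω : Metric.sphere (0 : E3) 1,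
        (2 : ℝ) • (⟪(Ω : E3), n⟫ * ⟪(Ω : E3), n⟫ * ⟪(Ω : E3), n⟫ * f ⟪(Ω : E3), n⟫) ∂σ₀)
      = 2 * ∫ Ω : Metric.sphere (0 : E3) 1,
        ⟪(Ω : E3), n⟫ * ⟪(Ω : E3), n⟫ * ⟪(Ω : E3), n⟫ * f ⟪(Ω : E3), n⟫ ∂σ₀ := by
    rw [integral_smul, smul_eq_mul]
  have s2 : (∫ Ω : Metric.sphere (0 : E3) 1,
        (3 : ℝ) • ((⟪(Ω : E3), n⟫ - ⟪(Ω : E3), n⟫ ^ 3) * f ⟪(Ω : E3), n⟫) ∂σ₀)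
      = 3 * ∫ Ω : Metric.sphere (0 : E3) 1,
        (⟪(Ω : E3), n⟫ - ⟪(Ω : E3), n⟫ ^ 3) * f ⟪(Ω : E3), n⟫ ∂σ₀ := by
    rw [integral_smul, smul_eq_mul]
  have h1' : Integrable (fun Ω : Metric.sphere (0 : E3) 1 =>
      (2 : ℝ) • (⟪(Ω : E3), n⟫ * ⟪(Ω : E3), n⟫ * ⟪(Ω : E3), n⟫ * f ⟪(Ω : E3), n⟫)) σ₀ :=
    h1.smul (2 : ℝ)
  have h2' : Integrable (fun Ω : Metric.sphere (0 : E3) 1 =>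
      (3 : ℝ) • ((⟪(Ω : E3), n⟫ - ⟪(Ω : E3), n⟫ ^ 3) * f ⟪(Ω : E3), n⟫)) σ₀ :=
    h2.smul (3 : ℝ)
  unfold T
  rw [← s1, ← s2, ← integral_sub h1' h2']
  congr 1; funext Ω
  simp only [smul_eq_mul]
  ring

include hf in
lemma T_expand (hn : ‖n‖ = 1) {p : E3} (hpn : ⟪n, p⟫ = 0) (hp1 : ‖p‖ = 1)
    (u v w : E3) :
    T n f u v w
      = T n f n p p * (⟪u, v⟫ * ⟪n, w⟫ + ⟪u, w⟫ * ⟪n, v⟫ + ⟪v, w⟫ * ⟪n, u⟫)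
        + (T n f n n n - 3 * T n f n p p) * (⟪n, u⟫ * ⟪n, v⟫ * ⟪n, w⟫) := by
  have hnn : (⟪n, n⟫ : ℝ) = 1 := by
    rw [real_inner_self_eq_norm_sq, hn]; norm_num
  obtain ⟨u', hu, hun⟩ : ∃ u', u = ⟪n, u⟫ • n + u' ∧ ⟪n, u'⟫ = 0 :=
    ⟨u - ⟪n, u⟫ • n, by abel, by rw [inner_sub_right, real_inner_smul_right, hnn]; ring⟩
  obtain ⟨v', hv, hvn⟩ : ∃ v', v = ⟪n, v⟫ • n + v' ∧ ⟪n, v'⟫ = 0 :=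
    ⟨v - ⟪n, v⟫ • n, by abel, by rw [inner_sub_right, real_inner_smul_right, hnn]; ring⟩
  obtain ⟨w', hw, hwn⟩ : ∃ w', w = ⟪n, w⟫ • n + w' ∧ ⟪n, w'⟫ = 0 :=
    ⟨w - ⟪n, w⟫ • n, by abel, by rw [inner_sub_right, real_inner_smul_right, hnn]; ring⟩
  have hun' : (⟪u', n⟫ : ℝ) = 0 := by rw [real_inner_comm]; exact hun
  have hvn' : (⟪v', n⟫ : ℝ) = 0 := by rw [real_inner_comm]; exact hvn
  have hwn' : (⟪w', n⟫ : ℝ) = 0 := by rw [real_inner_comm]; exact hwn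
  set α := (⟪n, u⟫ : ℝ)
  set β := (⟪n, v⟫ : ℝ)
  set γ := (⟪n, w⟫ : ℝ)
  -- expand the inner products on the RHS
  have huv : (⟪u, v⟫ : ℝ) = α * β + ⟪u', v'⟫ := by
    rw [hu, hv]
    simp only [inner_add_left, inner_add_right, real_inner_smul_left,
      real_inner_smul_right, hnn, hun', hun, hvn]
    ring
  have huw : (⟪u, w⟫ : ℝ) = α * γ + ⟪u', w'⟫ := by
    rw [hu, hw]
    simp only [inner_add_left, inner_add_right, real_inner_smul_left,
      real_inner_smul_right, hnn, hun', hun, hwn]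
    ring
  have hvw : (⟪v, w⟫ : ℝ) = β * γ + ⟪v', w'⟫ := by
    rw [hv, hw]
    simp only [inner_add_left, inner_add_right, real_inner_smul_left,
      real_inner_smul_right, hnn, hvn', hvn, hwn]
    ring
  -- expand the trilinear form
  have hT : T n f u v w
      = α * (β * (γ * T n f n n n + T n f n n w') + (γ * T n f n v' n + T n f n v' w'))
        + (β * (γ * T n f u' n n + T n f u' n w') + (γ * T n f u' v' n + T n f u' v' w')) := by
    rw [hu, T_add1 n f hf, T_smul1]
    rw [hv, T_add2 n f hf, T_add2 n f hf, T_smul2, T_smul2]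
    rw [hw, T_add3 n f hf, T_add3 n f hf, T_add3 n f hf, T_add3 n f hf,
      T_smul3, T_smul3, T_smul3, T_smul3]
  have z1 : T n f n n w' = 0 := T_odd1 n f hwn
  have z2 : T n f n v' n = 0 := by rw [T_comm23]; exact T_odd1 n f hvn
  have z3 : T n f u' n n = 0 := by rw [T_comm13]; exact T_odd1 n f hun
  have z4 : T n f u' v' w' = 0 := T_odd3 n f hun hvn hwn
  have b1 : T n f n v' w' = ⟪v', w'⟫ * T n f n p p := B_eq n f hf hpn hp1 hvn hwn
  have b2 : T n f u' n w' = ⟪u', w'⟫ * T n f n p p := by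
    rw [T_comm12]; exact B_eq n f hf hpn hp1 hun hwn
  have b3 : T n f u' v' n = ⟪u', v'⟫ * T n f n p p := by
    rw [T_comm13, T_comm23]; exact B_eq n f hf hpn hp1 hun hvn
  rw [hT, z1, z2, z3, z4, b1, b2, b3, huv, huw, hvw]
  ring

end SphereThirdMomentAux


open MeasureTheory RealInnerProductSpace

/-- Representation of the third-moment tensor of an axially symmetric angular
distribution: for a unit vector `n` and continuous `f`,
`∫_{S²} (Ω·u)(Ω·v)(Ω·w) f(Ω·n) dσ
  = a[(u·v)(n·w) + (u·w)(n·v) + (v·w)(n·u)] + b (n·u)(n·v)(n·w)` with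
`a = ½∫ ((Ω·n) − (Ω·n)³) f(Ω·n) dσ` and `b = ½∫ (5(Ω·n)³ − 3(Ω·n)) f(Ω·n) dσ`.
This is the representation of `Q^{M₁}` in terms of the Eddington factors `χ₁, χ₃`. -/
theorem sphere_third_moment_axisymmetric
    (σ : Measure (Metric.sphere (0 : EuclideanSpace ℝ (Fin 3)) 1))
    (hσ : σ = (volume : Measure (EuclideanSpace ℝ (Fin 3))).toSphere)
    (n : EuclideanSpace ℝ (Fin 3)) (hn : ‖n‖ = 1)
    (f : ℝ → ℝ) (hf : Continuous f) :
    ∀ u v w : EuclideanSpace ℝ (Fin 3),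
      (∫ Ω : Metric.sphere (0 : EuclideanSpace ℝ (Fin 3)) 1,
          ⟪(Ω : EuclideanSpace ℝ (Fin 3)), u⟫ * ⟪(Ω : EuclideanSpace ℝ (Fin 3)), v⟫ *
            ⟪(Ω : EuclideanSpace ℝ (Fin 3)), w⟫ * f ⟪(Ω : EuclideanSpace ℝ (Fin 3)), n⟫ ∂σ)
        = ((1 / 2) * ∫ Ω : Metric.sphere (0 : EuclideanSpace ℝ (Fin 3)) 1,
              (⟪(Ω : EuclideanSpace ℝ (Fin 3)), n⟫ -
                ⟪(Ω : EuclideanSpace ℝ (Fin 3)), n⟫ ^ 3) *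
                f ⟪(Ω : EuclideanSpace ℝ (Fin 3)), n⟫ ∂σ) *
            (⟪u, v⟫ * ⟪n, w⟫ + ⟪u, w⟫ * ⟪n, v⟫ + ⟪v, w⟫ * ⟪n, u⟫)
          + ((1 / 2) * ∫ Ω : Metric.sphere (0 : EuclideanSpace ℝ (Fin 3)) 1,
              (5 * ⟪(Ω : EuclideanSpace ℝ (Fin 3)), n⟫ ^ 3 -
                3 * ⟪(Ω : EuclideanSpace ℝ (Fin 3)), n⟫) *
                f ⟪(Ω : EuclideanSpace ℝ (Fin 3)), n⟫ ∂σ) *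
            (⟪n, u⟫ * ⟪n, v⟫ * ⟪n, w⟫) := by
  subst hσ
  intro u v w
  obtain ⟨p, q, hpn, hqn, hpq, hp1, hq1, hPar⟩ := SphereThirdMomentAux.exists_pq n hn
  have hqq : SphereThirdMomentAux.T n f n q q = SphereThirdMomentAux.T n f n p p :=
    SphereThirdMomentAux.T_eqnorm n f hqn hpn (hq1.trans hp1.symm)
  have hJ := SphereThirdMomentAux.J_eq n f hf hpn hqn hPar
  have hK := SphereThirdMomentAux.K_eq n f hf
  have e1 : ((1 / 2 : ℝ) * ∫ Ω : Metric.sphere (0 : EuclideanSpace ℝ (Fin 3)) 1,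
        (⟪(Ω : EuclideanSpace ℝ (Fin 3)), n⟫ - ⟪(Ω : EuclideanSpace ℝ (Fin 3)), n⟫ ^ 3) *
          f ⟪(Ω : EuclideanSpace ℝ (Fin 3)), n⟫
        ∂(volume : Measure (EuclideanSpace ℝ (Fin 3))).toSphere)
      = SphereThirdMomentAux.T n f n p p := by
    rw [hJ, hqq]; ring
  have e2 : ((1 / 2 : ℝ) * ∫ Ω : Metric.sphere (0 : EuclideanSpace ℝ (Fin 3)) 1,
        (5 * ⟪(Ω : EuclideanSpace ℝ (Fin 3)), n⟫ ^ 3 -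
          3 * ⟪(Ω : EuclideanSpace ℝ (Fin 3)), n⟫) *
          f ⟪(Ω : EuclideanSpace ℝ (Fin 3)), n⟫
        ∂(volume : Measure (EuclideanSpace ℝ (Fin 3))).toSphere)
      = SphereThirdMomentAux.T n f n n n - 3 * SphereThirdMomentAux.T n f n p p := by
    rw [hK, hJ, hqq]; ring
  rw [e1, e2]
  exact SphereThirdMomentAux.T_expand n f hf hn hpn hp1 u v w
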